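/- arXiv:1401.6610 — 4 statements merged into one kernel-verified Lean document; each statement's English description precedes it below -/
import Mathlib

section
/- Let λ₁, λ₂, λ₃, λ₄ ∈ ℂ² and λ̃₁, λ̃₂, λ̃₃, λ̃₄ ∈ ℂ² satisfy momentum conservation: the 2×2 matrix λ₁λ̃₁ᵀ + λ₂λ̃₂ᵀ + λ₃λ̃₃ᵀ + λ₄λ̃₄ᵀ is zero. Define the Mandelstam invariants s₂₃ = ⟨λ₂λ₃⟩[λ̃₂λ̃₃] and s₂₄ = ⟨λ₂λ₄⟩[λ̃₂λ̃₄]. Then s₂₃ · ⟨λ₂λ₄⟩ ⟨λ₃λ₁⟩ = −s₂₄ · ⟨λ₂λ₃⟩ ⟨λ₄λ₁⟩. Consequently, if moreover all the brackets ⟨λ₁λ₂⟩, ⟨λ₂λ₃⟩, ⟨λ₃λ₄⟩, ⟨λ₄λ₁⟩, ⟨λ₂λ₄⟩, ⟨λ₄λ₃⟩, ⟨λ₃λ₁⟩ and [λ̃₂λ̃₄] are nonzero, then the four-point permutation relation holds: 1/(⟨λ₁λ₂⟩⟨λ₂λ₄⟩⟨λ₄λ₃⟩⟨λ₃λ₁⟩)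 = (s₂₃/s₂₄) · 1/(⟨λ₁λ₂⟩⟨λ₂λ₃⟩⟨λ₃λ₄⟩⟨λ₄λ₁⟩). -/
/-- Angle bracket of two spinors: determinant of the 2×2 matrix with columns `l`, `m`. -/
noncomputable def brk (l m : Fin 2 → ℂ) : ℂ := l 0 * m 1 - l 1 * m 0

/-- Four-point momentum conservation implies
`s₂₃ ⟨24⟩⟨31⟩ = −s₂₄ ⟨23⟩⟨41⟩`, and hence (given the stated nonvanishing brackets)
the four-point permutation relation between Parke–Taylor denominators. -/
theorem four_point_permutation_relation
    (l1 l2 l3 l4 lt1 lt2 lt3 lt4 : Fin 2 → ℂ)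
    (hmom : ∀ i j : Fin 2,
      l1 i * lt1 j + l2 i * lt2 j + l3 i * lt3 j + l4 i * lt4 j = 0) :
    (brk l2 l3 * brk lt2 lt3) * (brk l2 l4 * brk l3 l1) =
      -((brk l2 l4 * brk lt2 lt4) * (brk l2 l3 * brk l4 l1)) ∧
    (brk l1 l2 ≠ 0 → brk l2 l3 ≠ 0 → brk l3 l4 ≠ 0 → brk l4 l1 ≠ 0 →
      brk l2 l4 ≠ 0 → brk l4 l3 ≠ 0 → brk l3 l1 ≠ 0 → brk lt2 lt4 ≠ 0 →
      1 / (brk l1 l2 * brk l2 l4 * brk l4 l3 * brk l3 l1) =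
        (brk l2 l3 * brk lt2 lt3) / (brk l2 l4 * brk lt2 lt4) *
          (1 / (brk l1 l2 * brk l2 l3 * brk l3 l4 * brk l4 l1))) := by
  have h00 := hmom 0 0
  have h01 := hmom 0 1
  have h10 := hmom 1 0
  have h11 := hmom 1 1
  have hkey : brk l1 l3 * brk lt3 lt2 + brk l1 l4 * brk lt4 lt2 = 0 := by
    simp only [brk]
    linear_combination (l1 0 * lt2 1) * h10 - (l1 0 * lt2 0) * h11
      - (l1 1 * lt2 1) * h00 + (l1 1 * lt2 0) * h01
  have h1 : (brk l2 l3 * brk lt2 lt3) * (brk l2 l4 * brk l3 l1) =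
      -((brk l2 l4 * brk lt2 lt4) * (brk l2 l3 * brk l4 l1)) := by
    simp only [brk] at hkey ⊢
    linear_combination ((l2 0 * l3 1 - l2 1 * l3 0) * (l2 0 * l4 1 - l2 1 * l4 0)) * hkey
  refine ⟨h1, fun h12 h23 h34 h41 h24 h43 h31 ht24 => ?_⟩
  have hD1 : brk l1 l2 * brk l2 l4 * brk l4 l3 * brk l3 l1 ≠ 0 :=
    mul_ne_zero (mul_ne_zero (mul_ne_zero h12 h24) h43) h31
  have hD2 : (brk l2 l4 * brk lt2 lt4) *
      (brk l1 l2 * brk l2 l3 * brk l3 l4 * brk l4 l1) ≠ 0 :=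
    mul_ne_zero (mul_ne_zero h24 ht24)
      (mul_ne_zero (mul_ne_zero (mul_ne_zero h12 h23) h34) h41)
  rw [div_mul_div_comm, mul_one, div_eq_div_iff hD1 hD2]
  simp only [brk] at h1 ⊢
  linear_combination (-((l1 0 * l2 1 - l1 1 * l2 0) * (l4 0 * l3 1 - l4 1 * l3 0))) * h1
end

section
/- Let A, B, Zᵢ, Z_{i+1}, Z_{i+2}, Z_{j−1}, Z_j, Z_{j+1} ∈ ℂ⁴ satisfy the unitarity-cut conditions ⟨A B Zᵢ Z_{i+1}⟩ = 0 and ⟨A B Z_j Z_{j+1}⟩ = 0. Then ⟨Zᵢ Z_{i+1} Z_j Z_{j+1}⟩ · ⟨A B Z_{i+1} Z_{i+2}⟩ · ⟨A B Z_{j−1} Z_j⟩ = ⟨A B Z_{i+1} Z_j⟩ · ⟨A B (Zᵢ Z_{i+1} Z_{i+2})∩(Z_{j−1} Z_j Z_{j+1})⟩. -/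
/-- Four-bracket: determinant of the 4×4 matrix whose columns are `a b c d`. -/
noncomputable def brk4 (a b c d : Fin 4 → ℂ) : ℂ :=
  Matrix.det (Matrix.of fun i j => ![a, b, c, d] j i)

/-- `⟨X Y (p q r)∩(s t u)⟩`: contraction of `X∧Y` with the bivector
representing the intersection line of the planes `(p q r)` and `(s t u)`. -/
noncomputable def interBrk (X Y p q r s t u : Fin 4 → ℂ) : ℂ :=
  brk4 X Y p q * brk4 r s t u + brk4 X Y q r * brk4 p s t u +
    brk4 X Y r p * brk4 q s t u

/-- Explicit cofactor expansion of the four-bracket. -/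
lemma brk4_expand (a b c d : Fin 4 → ℂ) : brk4 a b c d =
    a 0 * (b 1 * (c 2 * d 3 - c 3 * d 2) - b 2 * (c 1 * d 3 - c 3 * d 1) + b 3 * (c 1 * d 2 - c 2 * d 1))
  - b 0 * (a 1 * (c 2 * d 3 - c 3 * d 2) - a 2 * (c 1 * d 3 - c 3 * d 1) + a 3 * (c 1 * d 2 - c 2 * d 1))
  + c 0 * (a 1 * (b 2 * d 3 - b 3 * d 2) - a 2 * (b 1 * d 3 - b 3 * d 1) + a 3 * (b 1 * d 2 - b 2 * d 1))
  - d 0 * (a 1 * (b 2 * c 3 - b 3 * c 2) - a 2 * (b 1 * c 3 - b 3 * c 1) + a 3 * (b 1 * c 2 - b 2 * c 1)) := by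
  simp [brk4, Matrix.det_succ_row_zero, Fin.sum_univ_succ, Fin.succAbove]
  ring

/-- Antisymmetry in the last two slots. -/
lemma brk4_swap34 (a b c d : Fin 4 → ℂ) : brk4 a b c d = -brk4 a b d c := by
  rw [brk4_expand, brk4_expand]; ring

/-- Plücker relation for the line `AB`. -/
lemma pluecker (A B c d e f : Fin 4 → ℂ) :
    brk4 A B c d * brk4 A B e f = brk4 A B c e * brk4 A B d f - brk4 A B c f * brk4 A B d e := by
  simp only [brk4_expand]; ring

/-- Cramer five-term identity on `Zi, Zi1, Zjm, Zj, Zj1` contracted with `⟨A B · Zj⟩`. -/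
lemma cramer5 (A B Zi Zi1 Zjm Zj Zj1 : Fin 4 → ℂ) :
    brk4 Zi Zjm Zj Zj1 * brk4 A B Zi1 Zj - brk4 Zi1 Zjm Zj Zj1 * brk4 A B Zi Zj =
      brk4 Zi Zi1 Zj Zj1 * brk4 A B Zjm Zj - brk4 Zi Zi1 Zjm Zj * brk4 A B Zj Zj1 := by
  simp only [brk4_expand]; ring

/-- Under the unitarity-cut conditions, the unphysical pole `⟨A B i+1 j⟩`
converts into the intersection numerator `⟨A B (i i+1 i+2)∩(j−1 j j+1)⟩`. -/
theorem unphysical_pole_intersection_form (A B Zi Zi1 Zi2 Zjm Zj Zj1 : Fin 4 → ℂ)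
    (hcut1 : brk4 A B Zi Zi1 = 0) (hcut2 : brk4 A B Zj Zj1 = 0) :
    brk4 Zi Zi1 Zj Zj1 * brk4 A B Zi1 Zi2 * brk4 A B Zjm Zj =
      brk4 A B Zi1 Zj * interBrk A B Zi Zi1 Zi2 Zjm Zj Zj1 := by
  unfold interBrk
  have p1 : brk4 A B Zi1 Zj * brk4 A B Zi2 Zi =
      brk4 A B Zi1 Zi2 * brk4 A B Zj Zi - brk4 A B Zi1 Zi * brk4 A B Zj Zi2 :=
    pluecker A B Zi1 Zj Zi2 Zi
  have p2 := cramer5 A B Zi Zi1 Zjm Zj Zj1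
  have s1 : brk4 A B Zi1 Zi = -brk4 A B Zi Zi1 := brk4_swap34 A B Zi1 Zi
  have s2 : brk4 A B Zj Zi = -brk4 A B Zi Zj := brk4_swap34 A B Zj Zi
  linear_combination
    (-(brk4 Zi2 Zjm Zj Zj1 * brk4 A B Zi1 Zj + brk4 Zi1 Zjm Zj Zj1 * brk4 A B Zj Zi2)) * hcut1
    + (- brk4 Zi1 Zjm Zj Zj1) * p1
    + (- brk4 A B Zi1 Zi2) * p2
    + (brk4 Zi1 Zjm Zj Zj1 * brk4 A B Zj Zi2) * s1
    + (- brk4 Zi1 Zjm Zj Zj1 * brk4 A B Zi1 Zi2) * s2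
    + (brk4 A B Zi1 Zi2 * brk4 Zi Zi1 Zjm Zj) * hcut2
end

section
/- For any eight vectors a, b, c, d, e, f, g, h ∈ ℂ⁴ the five-term Schouten identity holds: ⟨f g h a⟩⟨b c d e⟩ + ⟨f g h b⟩⟨c d e a⟩ + ⟨f g h c⟩⟨d e a b⟩ + ⟨f g h d⟩⟨e a b c⟩ + ⟨f g h e⟩⟨a b c d⟩ = 0. -/
set_option maxHeartbeats 1000000 in
lemma brk4_eq (a b c d : Fin 4 → ℂ) : brk4 a b c d =
      a 0*b 1*c 2*d 3
      - a 0*b 1*c 3*d 2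
      - a 0*b 2*c 1*d 3
      + a 0*b 2*c 3*d 1
      + a 0*b 3*c 1*d 2
      - a 0*b 3*c 2*d 1
      - a 1*b 0*c 2*d 3
      + a 1*b 0*c 3*d 2
      + a 1*b 2*c 0*d 3
      - a 1*b 2*c 3*d 0
      - a 1*b 3*c 0*d 2
      + a 1*b 3*c 2*d 0
      + a 2*b 0*c 1*d 3
      - a 2*b 0*c 3*d 1
      - a 2*b 1*c 0*d 3
      + a 2*b 1*c 3*d 0
      + a 2*b 3*c 0*d 1
      - a 2*b 3*c 1*d 0
      - a 3*b 0*c 1*d 2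
      + a 3*b 0*c 2*d 1
      + a 3*b 1*c 0*d 2
      - a 3*b 1*c 2*d 0
      - a 3*b 2*c 0*d 1
      + a 3*b 2*c 1*d 0 := by
  simp [brk4, Matrix.det_succ_row_zero, Fin.sum_univ_succ, Fin.succAbove]
  ring

/-- Five-term Schouten identity for eight vectors in `ℂ⁴`. -/
theorem five_term_schouten_identity (a b c d e f g h : Fin 4 → ℂ) :
    brk4 f g h a * brk4 b c d e + brk4 f g h b * brk4 c d e a +
      brk4 f g h c * brk4 d e a b + brk4 f g h d * brk4 e a b c +
      brk4 f g h e * brk4 a b c d = 0 := by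
  simp only [brk4_eq]
  ring
end

section
/- Let x and y be complex 2×2 matrices and let λᵢ, λⱼ, λₖ, λₗ ∈ ℂ². Form the momentum twistors Zᵢ = (λᵢ, x λᵢ) ∈ ℂ⁴, Zⱼ = (λⱼ, x λⱼ), Zₖ = (λₖ, y λₖ), Zₗ = (λₗ, y λₗ) (first two components the spinor, last two its image under the matrix). Then the four-bracket factorizes as ⟨Zᵢ Zⱼ Zₖ Zₗ⟩ = ⟨λᵢ λⱼ⟩ · ⟨λₖ λₗ⟩ · det(x − y). In particular, if the two lines (Zᵢ, Zⱼ) and (Zₖ, Zₗ) correspond to spacetime points x and y with det(x−y) = 0 (a null separation), the four points are coplanar and the bracket vanishes. -/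
set_option maxHeartbeats 1000000 in
lemma det_fin_four' (A : Matrix (Fin 4) (Fin 4) ℂ) :
    A.det = A 0 0 * A 1 1 * A 2 2 * A 3 3 - A 0 0 * A 1 1 * A 2 3 * A 3 2 - A 0 0 * A 1 2 * A 2 1 * A 3 3 + A 0 0 * A 1 2 * A 2 3 * A 3 1 + A 0 0 * A 1 3 * A 2 1 * A 3 2 - A 0 0 * A 1 3 * A 2 2 * A 3 1 - A 0 1 * A 1 0 * A 2 2 * A 3 3 + A 0 1 * A 1 0 * A 2 3 * A 3 2 + A 0 1 * A 1 2 * A 2 0 * A 3 3 - A 0 1 * A 1 2 * A 2 3 * A 3 0 - A 0 1 * A 1 3 * A 2 0 * A 3 2 + A 0 1 * A 1 3 * A 2 2 * A 3 0 + A 0 2 * A 1 0 * A 2 1 * A 3 3 - A 0 2 * A 1 0 * A 2 3 * A 3 1 - A 0 2 * A 1 1 * A 2 0 * A 3 3 + A 0 2 * A 1 1 * A 2 3 * A 3 0 + A 0 2 * A 1 3 * A 2 0 * A 3 1 - A 0 2 * A 1 3 * A 2 1 * A 3 0 - A 0 3 * A 1 0 * A 2 1 * A 3 2 + A 0 3 *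 A 1 0 * A 2 2 * A 3 1 + A 0 3 * A 1 1 * A 2 0 * A 3 2 - A 0 3 * A 1 1 * A 2 2 * A 3 0 - A 0 3 * A 1 2 * A 2 0 * A 3 1 + A 0 3 * A 1 2 * A 2 1 * A 3 0 := by
  rw [Matrix.det_succ_row_zero]
  simp only [Fin.sum_univ_succ, Fin.sum_univ_zero, Matrix.det_fin_three,
    Matrix.submatrix_apply, Fin.succ_zero_eq_one, Fin.succ_one_eq_two,
    Fin.zero_succAbove, Fin.succ_succAbove_zero, Fin.succ_succAbove_one,
    Fin.val_zero, Fin.val_succ, Fin.val_one]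
  simp only [show (Fin.succ 2 : Fin 4) = 3 by decide,
    show ((2 : Fin 4).succAbove 2 : Fin 4) = 3 by decide,
    show ((1 : Fin 4).succAbove 2 : Fin 4) = 3 by decide,
    show (Fin.castSucc 2 : Fin 4) = 2 by decide,
    show ((3 : Fin 4).succAbove 2 : Fin 4) = 2 by decide]
  ring


/-- The momentum twistor `Z = (λ, x λ)` associated to a dual spacetime point
(2×2 matrix) `x` and a spinor `λ`. -/
noncomputable def twistor (x : Matrix (Fin 2) (Fin 2) ℂ) (l : Fin 2 → ℂ) :
    Fin 4 → ℂ :=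
  ![l 0, l 1, x.mulVec l 0, x.mulVec l 1]

set_option maxHeartbeats 1000000 in
/-- Factorization of the momentum-twistor four-bracket:
`⟨Zᵢ Zⱼ Zₖ Zₗ⟩ = ⟨λᵢ λⱼ⟩ ⟨λₖ λₗ⟩ det(x − y)`; in particular the bracket
vanishes when the two dual points are null separated. -/
theorem twistor_four_bracket_factorization
    (x y : Matrix (Fin 2) (Fin 2) ℂ) (li lj lk ll : Fin 2 → ℂ) :
    brk4 (twistor x li) (twistor x lj) (twistor y lk) (twistor y ll) =
      brk li lj * brk lk ll * (x - y).det ∧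
    ((x - y).det = 0 →
      brk4 (twistor x li) (twistor x lj) (twistor y lk) (twistor y ll) = 0) := by
  have h : brk4 (twistor x li) (twistor x lj) (twistor y lk) (twistor y ll) =
      brk li lj * brk lk ll * (x - y).det := by
    simp only [brk4, det_fin_four', brk, twistor, Matrix.det_fin_two, Matrix.of_apply,
      Matrix.cons_val', Matrix.cons_val_zero, Matrix.cons_val_one, Matrix.head_cons,
      Matrix.cons_val_fin_one, Matrix.head_fin_const, Matrix.empty_val',
      Matrix.cons_val_succ, Matrix.mulVec, dotProduct, Fin.sum_univ_two,
      show (3 : Fin 4) = Fin.succ 2 by decide, Matrix.cons_val_two,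
      Matrix.tail_cons, Matrix.sub_apply]
    ring
  exact ⟨h, fun h0 => by rw [h, h0, mul_zero]⟩
end
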